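/- The holonomy group of Didi is the Klein four-group: the image of Γ_D under the linear-part homomorphism Lin : Isom(ℝ³) → O(3) is exactly {I, diag(1,−1,−1), diag(−1,1,−1), diag(−1,−1,1)}; in particular this image has order 4 and every element of it squares to the identity (so it is isomorphic to ℤ/2ℤ × ℤ/2ℤ, and in particular Γ_D contains no element whose linear part has order 4). -/

import Mathlib

noncomputable section

/-- Points of `ℝ³`, written as `(x, y, z)`. -/
abbrev R3 : Type := ℝ × ℝ × ℝ

/-- The translation `T_w : x ↦ x + w` of `ℝ³`, as a bijection (it is an isometry). -/
def transl (w : R3) : Equiv.Perm R3 := Equiv.addRight w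

/-- The quarter-turn screw motion `τ(x,y,z) = (−y, x, z+1/2)`, as a bijection
(it is an isometry). -/
def tauE : Equiv.Perm R3 where
  toFun p := (-p.2.1, p.1, p.2.2 + 1/2)
  invFun p := (p.2.1, -p.1, p.2.2 - 1/2)
  left_inv p := by obtain ⟨x, y, z⟩ := p; simp
  right_inv p := by obtain ⟨x, y, z⟩ := p; simp

/-- The half-turn screw motion `ρ_x(x,y,z) = (x+1/2, −y, −z)`, as a bijection
(it is an isometry). -/
def rhoxE : Equiv.Perm R3 where
  toFun p := (p.1 + 1/2, -p.2.1, -p.2.2)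
  invFun p := (p.1 - 1/2, -p.2.1, -p.2.2)
  left_inv p := by obtain ⟨x, y, z⟩ := p; simp
  right_inv p := by obtain ⟨x, y, z⟩ := p; simp

/-- The half-turn screw motion `ρ_y(x,y,z) = (−x, y+1/2, 1−z)`, as a bijection
(it is an isometry). -/
def rhoyE : Equiv.Perm R3 where
  toFun p := (-p.1, p.2.1 + 1/2, 1 - p.2.2)
  invFun p := (-p.1, p.2.1 - 1/2, 1 - p.2.2)
  left_inv p := by obtain ⟨x, y, z⟩ := p; simp
  right_inv p := by obtain ⟨x, y, z⟩ := p; simp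

/-- `Γ_T`, the covering group of the tetracosm Tetra: the group generated by the
translations `T_{(1,0,0)}, T_{(0,1,0)}, T_{(0,0,2)}` and `τ`. -/
def GammaT : Subgroup (Equiv.Perm R3) :=
  Subgroup.closure {transl (1, 0, 0), transl (0, 1, 0), transl (0, 0, 2), tauE}

/-- `Γ_D`, the covering group of the didicosm Didi: the group generated by the
translations `T_{(1,0,0)}, T_{(0,1,0)}, T_{(0,0,2)}` and `ρ_x`, `ρ_y`. -/
def GammaD : Subgroup (Equiv.Perm R3) :=
  Subgroup.closure {transl (1, 0, 0), transl (0, 1, 0), transl (0, 0, 2), rhoxE, rhoyE}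

end
/-- The diagonal orthogonal map `diag(a,b,c) : (x,y,z) ↦ (ax, by, cz)` as a linear map. -/
def diagLin (a b c : ℝ) : R3 →ₗ[ℝ] R3 where
  toFun p := (a * p.1, b * p.2.1, c * p.2.2)
  map_add' p q := by simp [Prod.ext_iff]; refine ⟨by ring, by ring, by ring⟩
  map_smul' r p := by simp [Prod.ext_iff]; refine ⟨by ring, by ring, by ring⟩

lemma diagLin_apply (a b c : ℝ) (p : R3) : diagLin a b c p = (a * p.1, b * p.2.1, c * p.2.2) := rfl

lemma id_eq_diag : (LinearMap.id : R3 →ₗ[ℝ] R3) = diagLin 1 1 1 := by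
  ext p <;> simp [diagLin_apply]

lemma memK (s t u : ℝ) (hs : s = 1 ∨ s = -1) (ht : t = 1 ∨ t = -1)
    (hu : u = 1 ∨ u = -1) (hstu : s * t * u = 1) :
    diagLin s t u ∈ ({LinearMap.id, diagLin 1 (-1) (-1), diagLin (-1) 1 (-1),
        diagLin (-1) (-1) 1} : Set (R3 →ₗ[ℝ] R3)) := by
  rcases hs with rfl | rfl <;> rcases ht with rfl | rfl <;> rcases hu with rfl | rfl <;>
    norm_num at hstu <;> simp [Set.mem_insert_iff, id_eq_diag]

lemma gammaD_form : ∀ γ ∈ GammaD, ∃ s t u : ℝ,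
    (s = 1 ∨ s = -1) ∧ (t = 1 ∨ t = -1) ∧ (u = 1 ∨ u = -1) ∧ s * t * u = 1 ∧
    ∃ b : R3, ∀ x : R3, γ x = (s * x.1 + b.1, t * x.2.1 + b.2.1, u * x.2.2 + b.2.2) := by
  intro γ hγ
  induction hγ using Subgroup.closure_induction with
  | mem g hg =>
    simp only [Set.mem_insert_iff, Set.mem_singleton_iff] at hg
    rcases hg with rfl | rfl | rfl | rfl | rfl
    · exact ⟨1, 1, 1, Or.inl rfl, Or.inl rfl, Or.inl rfl, by norm_num, (1, 0, 0),
        fun x => by simp [transl, Prod.ext_iff]⟩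
    · exact ⟨1, 1, 1, Or.inl rfl, Or.inl rfl, Or.inl rfl, by norm_num, (0, 1, 0),
        fun x => by simp [transl, Prod.ext_iff]⟩
    · exact ⟨1, 1, 1, Or.inl rfl, Or.inl rfl, Or.inl rfl, by norm_num, (0, 0, 2),
        fun x => by simp [transl, Prod.ext_iff]⟩
    · exact ⟨1, -1, -1, Or.inl rfl, Or.inr rfl, Or.inr rfl, by norm_num, (1/2, 0, 0),
        fun x => by simp only [rhoxE, Equiv.coe_fn_mk, Prod.ext_iff]; refine ⟨by ring, by ring, by ring⟩⟩
    · exact ⟨-1, 1, -1, Or.inr rfl, Or.inl rfl, Or.inr rfl, by norm_num, (0, 1/2, 1),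
        fun x => by simp only [rhoyE, Equiv.coe_fn_mk, Prod.ext_iff]; refine ⟨by ring, by ring, by ring⟩⟩
  | one =>
    exact ⟨1, 1, 1, Or.inl rfl, Or.inl rfl, Or.inl rfl, by norm_num, (0, 0, 0),
      fun x => by simp [Prod.ext_iff]⟩
  | mul g h _ _ ihg ihh =>
    obtain ⟨s, t, u, hs, ht, hu, hstu, b, hb⟩ := ihg
    obtain ⟨s', t', u', hs', ht', hu', hstu', b', hb'⟩ := ihh
    refine ⟨s * s', t * t', u * u', ?_, ?_, ?_, ?_,
      (s * b'.1 + b.1, t * b'.2.1 + b.2.1, u * b'.2.2 + b.2.2), fun x => ?_⟩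
    · rcases hs with rfl | rfl <;> rcases hs' with rfl | rfl <;> norm_num
    · rcases ht with rfl | rfl <;> rcases ht' with rfl | rfl <;> norm_num
    · rcases hu with rfl | rfl <;> rcases hu' with rfl | rfl <;> norm_num
    · calc s * s' * (t * t') * (u * u') = (s * t * u) * (s' * t' * u') := by ring
        _ = 1 := by rw [hstu, hstu']; norm_num
    · show g (h x) = _
      rw [hb' x, hb]
      simp only [Prod.ext_iff]
      refine ⟨by ring, by ring, by ring⟩
  | inv g _ ihg =>
    obtain ⟨s, t, u, hs, ht, hu, hstu, b, hb⟩ := ihg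
    have hs2 : s * s = 1 := by rcases hs with rfl | rfl <;> norm_num
    have ht2 : t * t = 1 := by rcases ht with rfl | rfl <;> norm_num
    have hu2 : u * u = 1 := by rcases hu with rfl | rfl <;> norm_num
    refine ⟨s, t, u, hs, ht, hu, hstu,
      (-(s * b.1), -(t * b.2.1), -(u * b.2.2)), fun x => ?_⟩
    have : g⁻¹ x = g.symm x := rfl
    rw [this, Equiv.symm_apply_eq, hb]
    obtain ⟨x1, x2, x3⟩ := x
    simp only [Prod.ext_iff]
    refine ⟨by linear_combination (b.1 - x1) * hs2,
      by linear_combination (b.2.1 - x2) * ht2,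
      by linear_combination (b.2.2 - x3) * hu2⟩

lemma exists_form_mem (γ : Equiv.Perm R3) (s t u : ℝ) (b : R3)
    (h : ∀ x : R3, γ x = (s * x.1 + b.1, t * x.2.1 + b.2.1, u * x.2.2 + b.2.2)) :
    ∃ c : R3, ∀ x : R3, γ x = diagLin s t u x + c := by
  refine ⟨b, fun x => ?_⟩
  rw [h x]
  simp [diagLin_apply, Prod.ext_iff]

/-- the holonomy group of Didi is the Klein four-group: the image of
`Γ_D` under the linear-part homomorphism is exactly
`{I, diag(1,−1,−1), diag(−1,1,−1), diag(−1,−1,1)}`; this image has 4 elements and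
every element of it squares to the identity, so it is isomorphic to `ℤ/2 × ℤ/2` (in
particular `Γ_D` contains no element whose linear part has order 4). -/
theorem holonomy_didi :
    (∀ γ ∈ GammaD, ∃ A ∈ ({LinearMap.id, diagLin 1 (-1) (-1), diagLin (-1) 1 (-1),
        diagLin (-1) (-1) 1} : Set (R3 →ₗ[ℝ] R3)),
      ∃ b : R3, ∀ x : R3, γ x = A x + b) ∧
    (∀ γ ∈ GammaD, ∀ (A : R3 →ₗ[ℝ] R3) (b : R3), (∀ x : R3, γ x = A x + b) →
      A ∈ ({LinearMap.id, diagLin 1 (-1) (-1), diagLin (-1) 1 (-1),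
        diagLin (-1) (-1) 1} : Set (R3 →ₗ[ℝ] R3))) ∧
    (∀ A ∈ ({LinearMap.id, diagLin 1 (-1) (-1), diagLin (-1) 1 (-1),
        diagLin (-1) (-1) 1} : Set (R3 →ₗ[ℝ] R3)),
      ∃ γ ∈ GammaD, ∃ b : R3, ∀ x : R3, γ x = A x + b) ∧
    Set.ncard ({LinearMap.id, diagLin 1 (-1) (-1), diagLin (-1) 1 (-1),
        diagLin (-1) (-1) 1} : Set (R3 →ₗ[ℝ] R3)) = 4 ∧
    (∀ A ∈ ({LinearMap.id, diagLin 1 (-1) (-1), diagLin (-1) 1 (-1),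
        diagLin (-1) (-1) 1} : Set (R3 →ₗ[ℝ] R3)), A ∘ₗ A = LinearMap.id) := by
  have diagLin_inj : ∀ {a b c a' b' c' : ℝ}, diagLin a b c = diagLin a' b' c' →
      a = a' ∧ b = b' ∧ c = c' := by
    intro a b c a' b' c' h
    have h1 := LinearMap.congr_fun h (1, 1, 1)
    simpa [diagLin_apply, Prod.ext_iff] using h1
  refine ⟨?_, ?_, ?_, ?_, ?_⟩
  · intro γ hγ
    obtain ⟨s, t, u, hs, ht, hu, hstu, b, hb⟩ := gammaD_form γ hγ
    exact ⟨diagLin s t u, memK s t u hs ht hu hstu, exists_form_mem γ s t u b hb⟩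
  · intro γ hγ A b hAb
    obtain ⟨s, t, u, hs, ht, hu, hstu, b', hb'⟩ := gammaD_form γ hγ
    obtain ⟨c, hc⟩ := exists_form_mem γ s t u b' hb'
    have hb0 : b = c := by
      have h0 := (hAb 0).symm.trans (hc 0)
      simpa using h0
    have hA : A = diagLin s t u := by
      apply LinearMap.ext
      intro x
      have := (hAb x).symm.trans (hc x)
      rw [hb0] at this
      exact add_right_cancel this
    rw [hA]
    exact memK s t u hs ht hu hstu
  · intro A hA
    simp only [Set.mem_insert_iff, Set.mem_singleton_iff] at hA
    have h1 : rhoxE ∈ GammaD := Subgroup.subset_closure (by simp)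
    have h2 : rhoyE ∈ GammaD := Subgroup.subset_closure (by simp)
    rcases hA with rfl | rfl | rfl | rfl
    · exact ⟨1, one_mem _, 0, fun x => by simp⟩
    · exact ⟨rhoxE, h1, (1/2, 0, 0), fun x => by
        simp [rhoxE, diagLin_apply, Prod.ext_iff]⟩
    · exact ⟨rhoyE, h2, (0, 1/2, 1), fun x => by
        simp [rhoyE, diagLin_apply, Prod.ext_iff]; ring⟩
    · exact ⟨rhoxE * rhoyE, mul_mem h1 h2, (1/2, -1/2, -1), fun x => by
        show rhoxE (rhoyE x) = _
        simp [rhoxE, rhoyE, diagLin_apply, Prod.ext_iff]; constructor <;> ring⟩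
  · have e12 : (LinearMap.id : R3 →ₗ[ℝ] R3) ≠ diagLin 1 (-1) (-1) := by
      rw [id_eq_diag]; intro h; have := diagLin_inj h; norm_num at this
    have e13 : (LinearMap.id : R3 →ₗ[ℝ] R3) ≠ diagLin (-1) 1 (-1) := by
      rw [id_eq_diag]; intro h; have := diagLin_inj h; norm_num at this
    have e14 : (LinearMap.id : R3 →ₗ[ℝ] R3) ≠ diagLin (-1) (-1) 1 := by
      rw [id_eq_diag]; intro h; have := diagLin_inj h; norm_num at this
    have e23 : diagLin 1 (-1) (-1) ≠ diagLin (-1) 1 (-1) := by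
      intro h; have := diagLin_inj h; norm_num at this
    have e24 : diagLin 1 (-1) (-1) ≠ diagLin (-1) (-1) 1 := by
      intro h; have := diagLin_inj h; norm_num at this
    have e34 : diagLin (-1) 1 (-1) ≠ diagLin (-1) (-1) 1 := by
      intro h; have := diagLin_inj h; norm_num at this
    rw [Set.ncard_insert_of_notMem (by simp [e12, e13, e14]) (Set.toFinite _),
      Set.ncard_insert_of_notMem (by simp [e23, e24]) (Set.toFinite _),
      Set.ncard_insert_of_notMem (by simp [e34]) (Set.toFinite _),
      Set.ncard_singleton]
  · intro A hA
    simp only [Set.mem_insert_iff, Set.mem_singleton_iff] at hA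
    rcases hA with rfl | rfl | rfl | rfl <;>
      refine LinearMap.ext fun p => ?_ <;>
      simp [diagLin_apply, Prod.ext_iff]
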